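/- Let Δ ≥ 1 be an integer and 0 ≤ λ < 1. Let T be a rooted tree on n vertices with maximum degree at most Δ. Then there is a subtree Q of T containing the root such that (1−2λ)·n ≤ |Q| ≤ (1−λ)·n + 2Δ, and the graph T minus the edges of Q (with isolated vertices removed) has at most Δ connected components, each of order at most λ·n. -/

import Mathlib

set_option linter.unusedSectionVars false
set_option maxHeartbeats 1000000

open SimpleGraph Set

namespace Stmt10
variable {W : Type} [DecidableEq W] {T : SimpleGraph W} {r : W} {P : ∀ w : W, T.Walk r w}

lemma walk_append_cancel {u v w : W} (p : T.Walk u v) {q q' : T.Walk v w}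
    (h : p.append q = p.append q') : q = q' := by
  induction p with
  | nil => simpa using h
  | cons h' p ih =>
      rw [Walk.cons_append, Walk.cons_append] at h
      exact ih (by injection h)

lemma single_path {u v : W} (h : T.Adj u v) : (Walk.cons h Walk.nil).IsPath := by
  simp [Walk.isPath_def, h.ne]

lemma ncard_biUnion {α β : Type} [DecidableEq α] (A : Finset α) (g : α → Set β)
    (hfin : ∀ a ∈ A, (g a).Finite)
    (hdisj : ∀ a ∈ A, ∀ b ∈ A, a ≠ b → Disjoint (g a) (g b)) :
    (⋃ a ∈ A, g a).ncard = ∑ a ∈ A, (g a).ncard := by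
  induction A using Finset.induction with
  | empty => simp
  | @insert a A ha ih =>
      rw [Finset.sum_insert ha]
      have hUfin : (⋃ b ∈ A, g b).Finite :=
        Set.Finite.biUnion A.finite_toSet (fun b hb => hfin b (Finset.mem_insert_of_mem hb))
      have hd : Disjoint (g a) (⋃ b ∈ A, g b) := by
        rw [Set.disjoint_left]
        intro x hx hx'
        simp only [Set.mem_iUnion] at hx'
        obtain ⟨b, hb, hxb⟩ := hx'
        exact (Set.disjoint_left.mp (hdisj a (Finset.mem_insert_self a A) b
          (Finset.mem_insert_of_mem hb) (fun h => ha (h ▸ hb)))) hx hxb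
      have key := Set.ncard_union_eq hd (hfin a (Finset.mem_insert_self a A)) hUfin
      rw [show (⋃ b ∈ insert a A, g b) = g a ∪ ⋃ b ∈ A, g b by
            simp [Set.biUnion_insert], key,
          ih (fun b hb => hfin b (Finset.mem_insert_of_mem hb))
            (fun b hb c hc hbc => hdisj b (Finset.mem_insert_of_mem hb) c
              (Finset.mem_insert_of_mem hc) hbc)]

section
variable (hP : ∀ w, (P w).IsPath)
    (hU : ∀ {u w : W} (p q : T.Walk u w), p.IsPath → q.IsPath → p = q)

include hP hU

lemma take_eq {w x : W} (hx : x ∈ (P w).support) : (P w).takeUntil x hx = P x :=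
  hU _ _ ((hP w).takeUntil hx) (hP x)

lemma drop_split {w x : W} (hx : x ∈ (P w).support) :
    P w = (P x).append ((P w).dropUntil x hx) := by
  conv_lhs => rw [← Walk.take_spec (P w) hx]
  rw [take_eq hP hU hx]

lemma mem_trans {w x a : W} (hx : x ∈ (P w).support) (ha : a ∈ (P x).support) :
    a ∈ (P w).support := by
  have h := Walk.support_takeUntil_subset (P w) hx
  rw [take_eq hP hU hx] at h
  exact h ha

lemma antisym {x a : W} (hx : x ∈ (P a).support) (ha : a ∈ (P x).support) : x = a := by
  have h1 := congrArg Walk.length (drop_split hP hU hx)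
  have h2 := congrArg Walk.length (drop_split hP hU ha)
  rw [Walk.length_append] at h1 h2
  exact Walk.eq_of_length_eq_zero (p := (P a).dropUntil x hx) (by omega)

lemma edge_split {z a : W} (hz : z ∈ (P a).support) (hza : T.Adj z a) :
    P a = (P z).append (Walk.cons hza Walk.nil) := by
  have hd : (P a).dropUntil z hz = Walk.cons hza Walk.nil :=
    hU _ _ ((hP a).dropUntil hz) (single_path hza)
  rw [← hd]
  exact drop_split hP hU hz

lemma concat_split {w y : W} (hadj : T.Adj w y) (hy : y ∉ (P w).support) :
    P y = (P w).append (Walk.cons hadj Walk.nil) := by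
  refine (hU _ _ ?_ (hP y)).symm
  rw [Walk.isPath_def, Walk.support_append]
  simp only [Walk.support_cons, Walk.support_nil, List.tail_cons]
  refine ((hP w).2).append (by simp) ?_
  intro a ha hmem
  simp only [List.mem_singleton] at hmem
  exact hy (hmem ▸ ha)

lemma adj_stay {w a y : W} (ha : a ∈ (P w).support) (hwa : w ≠ a) (hadj : T.Adj w y) :
    a ∈ (P y).support := by
  by_cases hy : y ∈ (P w).support
  · by_contra hna
    have h1 := drop_split hP hU hy
    rw [h1, Walk.mem_support_append_iff] at ha
    rcases ha with ha | ha
    · exact hna ha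
    · have hd : (P w).dropUntil y hy = Walk.cons hadj.symm Walk.nil :=
        hU _ _ ((hP w).dropUntil hy) (single_path hadj.symm)
      rw [hd] at ha
      simp only [Walk.support_cons, Walk.support_nil, List.mem_cons,
        List.mem_singleton, List.not_mem_nil, or_false] at ha
      rcases ha with ha | ha
      · exact hna (ha ▸ Walk.end_mem_support (P y))
      · exact hwa ha.symm
  · rw [concat_split hP hU hadj hy, Walk.mem_support_append_iff]
    exact Or.inl ha

lemma exit_eq {v a y : W} (hva : v ∈ (P a).support) (hvadj : T.Adj v a)
    (hadj : T.Adj a y) (hy : a ∉ (P y).support) : y = v := by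
  by_cases h : y ∈ (P a).support
  · have h1 := edge_split hP hU h hadj.symm
    have h2 := edge_split hP hU hva hvadj
    have hs := congrArg Walk.support (h1.symm.trans h2)
    rw [Walk.support_append, Walk.support_append] at hs
    simp only [Walk.support_cons, Walk.support_nil, List.tail_cons] at hs
    have hsupp : (P y).support = (P v).support := List.append_inj_left' hs rfl
    have hv_in : v ∈ (P y).support := hsupp ▸ Walk.end_mem_support (P v)
    have hy_in : y ∈ (P v).support := hsupp ▸ Walk.end_mem_support (P y)
    exact antisym hP hU hy_in hv_in
  · exact absurd (by
      rw [concat_split hP hU hadj h, Walk.mem_support_append_iff]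
      exact Or.inl (Walk.end_mem_support (P a))) hy

lemma split_child {v a w : W} (hva : v ∈ (P a).support) (hvadj : T.Adj v a)
    (hw : a ∈ (P w).support) :
    ∃ q : T.Walk a w, P w = (P v).append (Walk.cons hvadj q) := by
  refine ⟨(P w).dropUntil a hw, ?_⟩
  have h1 := drop_split hP hU hw
  rw [edge_split hP hU hva hvadj] at h1
  conv_lhs => rw [h1]
  rw [← Walk.append_assoc]
  congr 1

lemma child_unique {v a b w : W} (hva : v ∈ (P a).support) (hvadj : T.Adj v a)
    (hvb : v ∈ (P b).support) (hvbadj : T.Adj v b)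
    (hwa : a ∈ (P w).support) (hwb : b ∈ (P w).support) : a = b := by
  obtain ⟨qa, h1⟩ := split_child hP hU hva hvadj hwa
  obtain ⟨qb, h2⟩ := split_child hP hU hvb hvbadj hwb
  have h := walk_append_cancel (P v) (h1.symm.trans h2)
  have := congrArg (fun z => Walk.getVert z 1) h
  simpa [Walk.getVert_cons_succ, Walk.getVert_zero] using this

lemma child_irrefl {v a : W} (hva : v ∈ (P a).support) (hvadj : T.Adj v a)
    (h : a ∈ (P v).support) : False :=
  hvadj.ne (antisym hP hU hva h)

lemma exists_child {v w : W} (hwv : v ∈ (P w).support) (hne : w ≠ v) :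
    ∃ a, T.Adj v a ∧ v ∈ (P a).support ∧ a ∈ (P w).support := by
  have h1 := drop_split hP hU hwv
  set d := (P w).dropUntil v hwv with hd
  clear_value d
  cases d with
  | nil => exact absurd rfl hne
  | @cons _ a _ h d' =>
      refine ⟨a, h, ?_, ?_⟩
      · have hnodup : ((P v).support ++ d'.support).Nodup := by
          have := (hP w).2
          rw [h1, Walk.support_append] at this
          simpa using this
        have hPa : P a = (P v).append (Walk.cons h Walk.nil) := by
          refine (hU _ _ ?_ (hP a)).symm
          rw [Walk.isPath_def, Walk.support_append]
          simp only [Walk.support_cons, Walk.support_nil, List.tail_cons]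
          refine (List.Nodup.of_append_left hnodup).append (by simp) ?_
          intro x hx hmem
          simp only [List.mem_singleton] at hmem
          subst hmem
          exact (List.disjoint_of_nodup_append hnodup) hx (Walk.start_mem_support d')
        rw [hPa, Walk.mem_support_append_iff]
        exact Or.inl (Walk.end_mem_support (P v))
      · rw [h1, Walk.mem_support_append_iff]
        refine Or.inr ?_
        simp [Walk.support_cons]

end
end Stmt10

/-- Tree splitting. Let `Δ ≥ 1`, `0 ≤ λ < 1`, and `T` a rooted tree on `n`
vertices with maximum degree at most `Δ`. Then there is a subtree `Q` containing the root
with `(1−2λ)·n ≤ |Q| ≤ (1−λ)·n + 2Δ` such that `T` minus the edges of `Q` (isolated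
vertices removed, i.e. looking only at components with more than one vertex) has at most
`Δ` components, each of order at most `λ·n`. -/
theorem stmt10 {W : Type} [Fintype W] (T : SimpleGraph W) (hT : T.IsTree) (r : W)
    (Δ : ℕ) (hΔ1 : 1 ≤ Δ) (hΔ : ∀ w : W, (T.neighborSet w).ncard ≤ Δ)
    (lam : ℝ) (h0 : 0 ≤ lam) (h1 : lam < 1) :
    ∃ Q : T.Subgraph, Q.Connected ∧ r ∈ Q.verts ∧
      (1 - 2 * lam) * (Fintype.card W : ℝ) ≤ (Q.verts.ncard : ℝ) ∧
      (Q.verts.ncard : ℝ) ≤ (1 - lam) * (Fintype.card W : ℝ) + 2 * Δ ∧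
      ({c : (T.deleteEdges Q.edgeSet).ConnectedComponent | 1 < c.supp.ncard}).ncard ≤ Δ ∧
      ∀ c : (T.deleteEdges Q.edgeSet).ConnectedComponent, 1 < c.supp.ncard →
        (c.supp.ncard : ℝ) ≤ lam * (Fintype.card W : ℝ) := by
  classical
  obtain ⟨hconn, hacyc⟩ := hT
  have hU : ∀ {u w : W} (p q : T.Walk u w), p.IsPath → q.IsPath → p = q := by
    intro u w p q hp hq
    exact ((SimpleGraph.IsTree.mk hconn hacyc).existsUnique_path u w).unique hp hq
  choose P hP using fun w => ((SimpleGraph.IsTree.mk hconn hacyc).existsUnique_path r w).exists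
  set n := Fintype.card W with hn
  have hn1 : 1 ≤ n := Fintype.card_pos_iff.mpr hconn.nonempty
  have hnR : (0:ℝ) < n := by exact_mod_cast hn1
  -- subtree sets
  set Sv : W → Set W := fun a => {w | a ∈ (P w).support} with hSv
  set s : W → ℕ := fun a => (Sv a).ncard with hs
  have hmem_self : ∀ a, a ∈ Sv a := fun a => Walk.end_mem_support (P a)
  have hs_pos : ∀ a, 1 ≤ s a := fun a => (Set.ncard_pos (Set.toFinite _)).mpr ⟨a, hmem_self a⟩
  have hsr : s r = n := by
    have : Sv r = Set.univ := Set.eq_univ_of_forall (fun w => Walk.start_mem_support (P w))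
    rw [hs]; simp only [this, Set.ncard_univ, Nat.card_eq_fintype_card, hn]
  -- minimal heavy vertex
  have hCand : r ∈ {u : W | lam * n ≤ (s u : ℝ)} := by
    simp only [Set.mem_setOf_eq, hsr]
    nlinarith
  obtain ⟨v, hvC, hvmin⟩ := Set.exists_min_image {u : W | lam * n ≤ (s u : ℝ)} s
    (Set.toFinite _) ⟨r, hCand⟩
  simp only [Set.mem_setOf_eq] at hvC
  -- children
  set C : Finset W := Finset.univ.filter (fun a => T.Adj v a ∧ v ∈ (P a).support) with hC
  have hCmem : ∀ a, a ∈ C ↔ T.Adj v a ∧ v ∈ (P a).support := by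
    intro a; simp [hC]
  have hCcard : C.card ≤ Δ := by
    have hsub : (↑C : Set W) ⊆ T.neighborSet v := by
      intro a ha
      exact ((hCmem a).mp ha).1
    calc C.card = (↑C : Set W).ncard := (Set.ncard_coe_finset C).symm
    _ ≤ (T.neighborSet v).ncard := Set.ncard_le_ncard hsub (Set.toFinite _)
    _ ≤ Δ := hΔ v
  -- children subtrees inside S v
  have hsubv : ∀ a ∈ C, Sv a ⊆ Sv v \ {v} := by
    intro a ha w hw
    obtain ⟨hadj, hva⟩ := (hCmem a).mp ha
    refine ⟨Stmt10.mem_trans hP hU hw hva, ?_⟩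
    intro hwv
    simp only [Set.mem_singleton_iff] at hwv
    subst hwv
    exact Stmt10.child_irrefl hP hU hva hadj hw
  have hdisjC : ∀ a ∈ C, ∀ b ∈ C, a ≠ b → Disjoint (Sv a) (Sv b) := by
    intro a ha b hb hab
    obtain ⟨hadja, hva⟩ := (hCmem a).mp ha
    obtain ⟨hadjb, hvb⟩ := (hCmem b).mp hb
    rw [Set.disjoint_left]
    intro w hwa hwb
    exact hab (Stmt10.child_unique hP hU hva hadja hvb hadjb hwa hwb)
  have hcoverC : Sv v \ {v} = ⋃ a ∈ C, Sv a := by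
    apply Set.Subset.antisymm
    · intro w ⟨hwv, hwne⟩
      simp only [Set.mem_singleton_iff] at hwne
      obtain ⟨a, hadj, hva, hwa⟩ := Stmt10.exists_child hP hU hwv hwne
      simp only [Set.mem_iUnion]
      exact ⟨a, (hCmem a).mpr ⟨hadj, hva⟩, hwa⟩
    · intro w hw
      simp only [Set.mem_iUnion] at hw
      obtain ⟨a, ha, hwa⟩ := hw
      exact hsubv a ha hwa
  have hsumC : ∑ a ∈ C, s a = s v - 1 := by
    rw [← Stmt10.ncard_biUnion C Sv (fun a _ => Set.toFinite _) hdisjC, ← hcoverC]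
    exact Set.ncard_diff_singleton_of_mem (hmem_self v)
  have hsumCR : ∑ a ∈ C, ((s a : ℝ) - 1) = ((s v : ℝ) - 1) - C.card := by
    have h1 : ((∑ a ∈ C, s a : ℕ) : ℝ) = (s v : ℝ) - 1 := by
      rw [hsumC]
      have := hs_pos v
      push_cast [Nat.cast_sub this]
      ring
    rw [Finset.sum_sub_distrib]
    push_cast at h1 ⊢
    rw [h1]
    simp
  -- each child subtree is small
  have hlt : ∀ a ∈ C, (s a : ℝ) < lam * n := by
    intro a ha
    by_contra hge
    push_neg at hge
    have h2 : s a ≤ s v - 1 := by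
      have := Set.ncard_le_ncard (hsubv a ha) (Set.toFinite _)
      rw [Set.ncard_diff_singleton_of_mem (hmem_self v)] at this
      exact this
    have := hvmin a hge
    have := hs_pos v
    omega
  -- greedy choice of A
  set 𝒜 : Finset (Finset W) := C.powerset.filter
    (fun A => lam * n - 2*Δ ≤ ∑ a ∈ A, ((s a : ℝ) - 1)) with h𝒜
  have hCin : C ∈ 𝒜 := by
    rw [h𝒜, Finset.mem_filter]
    refine ⟨Finset.mem_powerset_self C, ?_⟩
    rw [hsumCR]
    have h2 : (C.card : ℝ) ≤ Δ := by exact_mod_cast hCcard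
    have h3 : (1:ℝ) ≤ Δ := by exact_mod_cast hΔ1
    linarith [hvC]
  obtain ⟨A, hA𝒜, hAmin⟩ := Finset.exists_min_image 𝒜 Finset.card ⟨C, hCin⟩
  have hAsub : A ⊆ C := Finset.mem_powerset.mp (Finset.mem_filter.mp (by rw [h𝒜] at hA𝒜; exact hA𝒜)).1
  have hAlow : lam * n - 2*Δ ≤ ∑ a ∈ A, ((s a : ℝ) - 1) := by
    rw [h𝒜, Finset.mem_filter] at hA𝒜
    exact hA𝒜.2
  have hAup : ∑ a ∈ A, ((s a : ℝ) - 1) ≤ 2 * (lam * n) := by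
    rcases A.eq_empty_or_nonempty with hAe | ⟨a0, ha0⟩
    · rw [hAe]
      simp
      positivity
    · have hcard : (A.erase a0).card < A.card := Finset.card_erase_lt_of_mem ha0
      have hnotin : A.erase a0 ∉ 𝒜 := by
        intro hin
        exact absurd (hAmin _ hin) (by omega)
      have hfail : ¬ (lam * n - 2*Δ ≤ ∑ a ∈ A.erase a0, ((s a : ℝ) - 1)) := by
        intro hok
        exact hnotin (by
          rw [h𝒜, Finset.mem_filter]
          exact ⟨Finset.mem_powerset.mpr ((A.erase_subset a0).trans hAsub), hok⟩)
      push_neg at hfail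
      have hsplit : ∑ a ∈ A.erase a0, ((s a : ℝ) - 1) + ((s a0 : ℝ) - 1)
          = ∑ a ∈ A, ((s a : ℝ) - 1) := Finset.sum_erase_add A _ ha0
      have hsa0 := hlt a0 (hAsub ha0)
      have hD : (1:ℝ) ≤ Δ := by exact_mod_cast hΔ1
      linarith
  -- removed set
  set Rem : Set W := ⋃ a ∈ A, (Sv a \ {a}) with hRem
  set K : Set W := Remᶜ with hK
  have hRem_mem : ∀ x ∈ Rem, ∃ a ∈ A, a ∈ (P x).support ∧ x ≠ a := by
    intro x hx
    rw [hRem] at hx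
    simp only [Set.mem_iUnion, Set.mem_diff, Set.mem_singleton_iff] at hx
    obtain ⟨a, ha, hxa, hne⟩ := hx
    exact ⟨a, ha, hxa, hne⟩
  have hRem_intro : ∀ a ∈ A, ∀ x, a ∈ (P x).support → x ≠ a → x ∈ Rem := by
    intro a ha x hxa hne
    rw [hRem]
    simp only [Set.mem_iUnion, Set.mem_diff, Set.mem_singleton_iff]
    exact ⟨a, ha, hxa, hne⟩
  have hchildA : ∀ a ∈ A, T.Adj v a ∧ v ∈ (P a).support := fun a ha => (hCmem a).mp (hAsub ha)
  have hA_not_Rem : ∀ a ∈ A, a ∉ Rem := by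
    intro a ha hmem
    obtain ⟨b, hb, hba, hneq⟩ := hRem_mem a hmem
    obtain ⟨hadja, hva⟩ := hchildA a ha
    obtain ⟨hadjb, hvb⟩ := hchildA b hb
    exact hneq (Stmt10.child_unique hP hU hva hadja hvb hadjb (hmem_self a) hba)
  have hv_not_Rem : v ∉ Rem := by
    intro hmem
    obtain ⟨b, hb, hbv, hneq⟩ := hRem_mem v hmem
    obtain ⟨hadjb, hvb⟩ := hchildA b hb
    exact Stmt10.child_irrefl hP hU hvb hadjb hbv
  have hr_K : r ∈ K := by
    rw [hK, Set.mem_compl_iff]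
    intro hmem
    obtain ⟨b, hb, hbr, hneq⟩ := hRem_mem r hmem
    have hPr : P r = Walk.nil := hU _ _ (hP r) Walk.IsPath.nil
    rw [hPr] at hbr
    simp only [Walk.support_nil, List.mem_singleton] at hbr
    exact hneq hbr.symm
  -- the subgraph Q
  set Q : T.Subgraph := (⊤ : T.Subgraph).induce K with hQ
  have hQverts : Q.verts = K := rfl
  set G' : SimpleGraph W := T.deleteEdges Q.edgeSet with hG'
  have hG'adj : ∀ x y : W, G'.Adj x y ↔ T.Adj x y ∧ (x ∈ Rem ∨ y ∈ Rem) := by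
    intro x y
    rw [hG', SimpleGraph.deleteEdges_adj, SimpleGraph.Subgraph.mem_edgeSet, hQ]
    simp only [SimpleGraph.Subgraph.induce_adj, SimpleGraph.Subgraph.top_adj, hK,
      Set.mem_compl_iff]
    constructor
    · rintro ⟨hadj, hn⟩
      refine ⟨hadj, ?_⟩
      by_contra hcon
      push_neg at hcon
      exact hn ⟨hcon.1, hcon.2, hadj⟩
    · rintro ⟨hadj, hor⟩
      refine ⟨hadj, ?_⟩
      rintro ⟨hx, hy, -⟩
      rcases hor with h | h
      · exact hx h
      · exact hy h
  -- paths from r to kept vertices stay kept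
  have hkept : ∀ w ∈ K, ∀ z ∈ (P w).support, z ∈ K := by
    intro w hw z hz
    rw [hK, Set.mem_compl_iff]
    intro hzRem
    obtain ⟨b, hb, hbz, hzb⟩ := hRem_mem z hzRem
    have hbw : b ∈ (P w).support := Stmt10.mem_trans hP hU hz hbz
    have hwb : w = b := by
      by_contra hne
      exact (hK ▸ hw : w ∈ Remᶜ) (hRem_intro b hb w hbw hne)
    subst hwb
    exact hzb (Stmt10.antisym hP hU hz hbz)
  -- connectivity of Q
  have hcoe : ∀ {x y : W} (d : T.Walk x y), (∀ z ∈ d.support, z ∈ K) →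
      ∀ (hx : x ∈ Q.verts) (hy : y ∈ Q.verts), Q.coe.Reachable ⟨x, hx⟩ ⟨y, hy⟩ := by
    intro x y d
    induction d with
    | nil => intro _ hx hy; rfl
    | @cons x' z y' h d ih =>
        intro hd hx hy
        have hzK : z ∈ K := hd z (by simp [Walk.support_cons])
        have hadj : Q.coe.Adj ⟨x', hx⟩ ⟨z, hzK⟩ := by
          rw [SimpleGraph.Subgraph.coe_adj]
          exact ⟨hx, hzK, h⟩
        exact hadj.reachable.trans (ih (fun u hu => hd u (by simp [Walk.support_cons, hu])) hzK hy)
  have hQconn : Q.Connected := by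
    rw [SimpleGraph.Subgraph.connected_iff]
    constructor
    · rw [SimpleGraph.Subgraph.preconnected_iff]
      rintro ⟨x, hx⟩ ⟨y, hy⟩
      have h1 := hcoe (P x) (hkept x hx) hr_K hx
      have h2 := hcoe (P y) (hkept y hy) hr_K hy
      exact h1.symm.trans h2
    · exact ⟨r, hr_K⟩
  -- walks in G' starting in a removed subtree stay there
  have hWalkInS : ∀ a ∈ A, ∀ {x y : W} (q : G'.Walk x y),
      a ∈ (P x).support → a ∈ (P y).support := by
    intro a haA x y q
    obtain ⟨hadja, hva⟩ := hchildA a haA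
    induction q with
    | nil => exact id
    | @cons x' z y' h q ih =>
        intro hx
        apply ih
        obtain ⟨hTadj, hrem⟩ := (hG'adj x' z).mp h
        by_cases hxa : x' = a
        · subst hxa
          have hzRem : z ∈ Rem := by
            rcases hrem with hr' | hr'
            · exact absurd hr' (hA_not_Rem x' haA)
            · exact hr'
          by_cases hza : x' ∈ (P z).support
          · exact hza
          · exact absurd (Stmt10.exit_eq hP hU hva hadja hTadj hza ▸ hzRem) hv_not_Rem
        · exact Stmt10.adj_stay hP hU hx hxa hTadj
  -- reachability within a removed subtree
  have hReachAux : ∀ a ∈ A, ∀ {x y : W} (d : T.Walk x y),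
      a ∈ (P x).support → (∀ z ∈ d.support, z ≠ v) →
      G'.Reachable x y ∧ a ∈ (P y).support := by
    intro a haA x y d
    obtain ⟨hadja, hva⟩ := hchildA a haA
    induction d with
    | nil => exact fun hx _ => ⟨Reachable.refl _, hx⟩
    | @cons x' z y' h d ih =>
        intro hx hnv
        have hz_ne_v : z ≠ v := hnv z (by simp [Walk.support_cons])
        have hzS : a ∈ (P z).support := by
          by_cases hxa : x' = a
          · subst hxa
            by_cases hza : x' ∈ (P z).support
            · exact hza
            · exact absurd (Stmt10.exit_eq hP hU hva hadja h hza) hz_ne_v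
          · exact Stmt10.adj_stay hP hU hx hxa h
        have hG'a : G'.Adj x' z := by
          rw [hG'adj]
          refine ⟨h, ?_⟩
          by_cases hxa : x' = a
          · subst hxa
            exact Or.inr (hRem_intro x' haA z hzS (fun hc => h.ne (hc ▸ rfl)))
          · exact Or.inl (hRem_intro a haA x' hx hxa)
        obtain ⟨hre, hmem⟩ := ih hzS (fun u hu => hnv u (by simp [Walk.support_cons, hu]))
        exact ⟨hG'a.reachable.trans hre, hmem⟩
  have hReach : ∀ a ∈ A, ∀ x, a ∈ (P x).support → G'.Reachable a x := by
    intro a haA x hx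
    obtain ⟨hadja, hva⟩ := hchildA a haA
    obtain ⟨q, hq⟩ := Stmt10.split_child hP hU hva hadja hx
    have hvq : ∀ z ∈ q.support, z ≠ v := by
      have hnodup := (hP x).2
      rw [hq, Walk.support_append] at hnodup
      simp only [Walk.support_cons, List.tail_cons] at hnodup
      intro z hz hzv
      exact (List.disjoint_of_nodup_append hnodup) (hzv ▸ Walk.end_mem_support (P v)) hz
    exact (hReachAux a haA q (hmem_self a) hvq).1
  -- structure of nontrivial components
  have hcomp : ∀ c : G'.ConnectedComponent, 1 < c.supp.ncard →
      ∃ a ∈ A, a ∈ c.supp ∧ c.supp ⊆ Sv a := by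
    intro c hc
    obtain ⟨x, hxc, y, hyc, hxy⟩ := (Set.one_lt_ncard (Set.toFinite _)).mp hc
    rw [SimpleGraph.ConnectedComponent.mem_supp_iff] at hxc hyc
    have hreach : G'.Reachable x y := SimpleGraph.ConnectedComponent.exact (hxc.trans hyc.symm)
    obtain ⟨p⟩ := hreach
    obtain ⟨x0, hx0Rem, hx0c⟩ : ∃ x0, x0 ∈ Rem ∧ G'.connectedComponentMk x0 = c := by
      cases p with
      | nil => exact absurd rfl hxy
      | @cons _ z _ h p' =>
          obtain ⟨hTadj, hrem⟩ := (hG'adj x z).mp h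
          rcases hrem with hr' | hr'
          · exact ⟨x, hr', hxc⟩
          · exact ⟨z, hr', (SimpleGraph.ConnectedComponent.sound h.reachable).symm.trans hxc⟩
    obtain ⟨a, haA, hax0, hx0a⟩ := hRem_mem x0 hx0Rem
    have hac : a ∈ c.supp := by
      rw [SimpleGraph.ConnectedComponent.mem_supp_iff, ← hx0c]
      exact SimpleGraph.ConnectedComponent.sound (hReach a haA x0 hax0)
    refine ⟨a, haA, hac, ?_⟩
    intro w hw
    rw [SimpleGraph.ConnectedComponent.mem_supp_iff] at hw
    have : G'.Reachable x0 w := SimpleGraph.ConnectedComponent.exact (hx0c.trans hw.symm)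
    obtain ⟨q⟩ := this
    exact hWalkInS a haA q hax0
  -- component count
  have hcount : ({c : G'.ConnectedComponent | 1 < c.supp.ncard}).ncard ≤ Δ := by
    set f : G'.ConnectedComponent → W := fun c =>
      if h : 1 < c.supp.ncard then (hcomp c h).choose else v with hf
    have h1 : ({c : G'.ConnectedComponent | 1 < c.supp.ncard}).ncard ≤ (↑A : Set W).ncard := by
      apply Set.ncard_le_ncard_of_injOn f
      · intro c hc
        simp only [Set.mem_setOf_eq] at hc
        rw [hf]
        simp only [dif_pos hc]
        exact (hcomp c hc).choose_spec.1
      · intro c1 h1 c2 h2 heq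
        simp only [Set.mem_setOf_eq] at h1 h2
        rw [hf] at heq
        simp only [dif_pos h1, dif_pos h2] at heq
        have ha1 := (hcomp c1 h1).choose_spec.2.1
        have ha2 := (hcomp c2 h2).choose_spec.2.1
        rw [SimpleGraph.ConnectedComponent.mem_supp_iff] at ha1 ha2
        rw [← ha1, ← ha2]
        exact congrArg _ heq
    rw [Set.ncard_coe_finset] at h1
    exact h1.trans ((Finset.card_le_card hAsub).trans hCcard)
  -- component sizes
  have hsize : ∀ c : G'.ConnectedComponent, 1 < c.supp.ncard →
      (c.supp.ncard : ℝ) ≤ lam * n := by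
    intro c hc
    obtain ⟨a, haA, hac, hsub⟩ := hcomp c hc
    have h2 : c.supp.ncard ≤ s a := Set.ncard_le_ncard hsub (Set.toFinite _)
    have h3 : (s a : ℝ) < lam * n := hlt a (hAsub haA)
    have h4 : (c.supp.ncard : ℝ) ≤ (s a : ℝ) := by exact_mod_cast h2
    linarith
  -- cardinality of K
  have hRemcard : (Rem.ncard : ℝ) = ∑ a ∈ A, ((s a : ℝ) - 1) := by
    have h1 : Rem.ncard = ∑ a ∈ A, (Sv a \ {a}).ncard := by
      rw [hRem]
      exact Stmt10.ncard_biUnion A _ (fun a _ => Set.toFinite _)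
        (fun a ha b hb hab => Set.disjoint_of_subset Set.diff_subset Set.diff_subset
          (hdisjC a (hAsub ha) b (hAsub hb) hab))
    rw [h1]
    push_cast
    apply Finset.sum_congr rfl
    intro a _
    rw [Set.ncard_diff_singleton_of_mem (hmem_self a)]
    change ((s a - 1 : ℕ) : ℝ) = _
    have := hs_pos a
    push_cast [Nat.cast_sub this]
    ring
  have hKcard : (K.ncard : ℝ) = (n : ℝ) - ∑ a ∈ A, ((s a : ℝ) - 1) := by
    have h1 : Rem.ncard + K.ncard = n := by
      rw [hK]
      rw [Set.ncard_add_ncard_compl Rem (Set.toFinite _) (Set.toFinite _)]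
      rw [Nat.card_eq_fintype_card, hn]
    have h2 : (Rem.ncard : ℝ) + (K.ncard : ℝ) = (n : ℝ) := by exact_mod_cast h1
    linarith [hRemcard]
  -- final assembly
  refine ⟨Q, hQconn, hr_K, ?_, ?_, hcount, hsize⟩
  · rw [hQverts, hKcard]
    nlinarith [hAup]
  · rw [hQverts, hKcard]
    have hD : (1:ℝ) ≤ Δ := by exact_mod_cast hΔ1
    linarith [hAlow]
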